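/- Let g : ℝ^d → ℝ be λ-strongly convex and differentiable with β-Lipschitz gradient, where 0 < λ ≤ β. Then for any step size 0 < γ ≤ 1/β, the gradient-descent map is a contraction: for all x, y, ‖(x − γ∇g(x)) − (y − γ∇g(y))‖ ≤ (1 − γλ)·‖x − y‖. -/

import Mathlib

open RealInnerProductSpace

variable {E : Type*} [NormedAddCommGroup E] [InnerProductSpace ℝ E] [CompleteSpace E]

private lemma descent_lemma (g : E → ℝ) (β : ℝ) (hβ : 0 < β)
    (hdiff : Differentiable ℝ g)
    (hsmooth : ∀ u v, ‖gradient g u - gradient g v‖ ≤ β * ‖u - v‖) :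
    ∀ x y, g y ≤ g x + ⟪gradient g x, y - x⟫ + β / 2 * ‖y - x‖ ^ 2 := by
  intro x y
  set Δ := y - x with hΔ
  have hgrad_cont : Continuous (gradient g) := by
    have : LipschitzWith (Real.toNNReal β) (gradient g) := by
      apply LipschitzWith.of_dist_le_mul
      intro u v
      simpa [dist_eq_norm, Real.coe_toNNReal β hβ.le] using hsmooth u v
    exact this.continuous
  have hline : ∀ t : ℝ, HasDerivAt (fun t : ℝ => g (x + t • Δ))
      ⟪gradient g (x + t • Δ), Δ⟫ t := by
    intro t
    have h1 : HasDerivAt (fun t : ℝ => x + t • Δ) Δ t := by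
      simpa using ((hasDerivAt_id t).smul_const Δ).const_add x
    have h2 := ((hdiff (x + t • Δ)).hasGradientAt).hasFDerivAt
    have h3 := h2.comp_hasDerivAt t h1
    simpa [Function.comp_def] using h3
  have cont : Continuous fun t : ℝ => ⟪gradient g (x + t • Δ), Δ⟫ := by
    apply Continuous.inner
    · exact hgrad_cont.comp (by continuity)
    · exact continuous_const
  have ftc : ∫ t in (0:ℝ)..1, ⟪gradient g (x + t • Δ), Δ⟫ =
      g (x + (1:ℝ) • Δ) - g (x + (0:ℝ) • Δ) :=
    intervalIntegral.integral_eq_sub_of_hasDerivAt (fun t _ => hline t)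
      (cont.intervalIntegrable 0 1)
  have contrhs : Continuous fun t : ℝ => ⟪gradient g x, Δ⟫ + β * ‖Δ‖ ^ 2 * t := by
    continuity
  have mono : ∫ t in (0:ℝ)..1, ⟪gradient g (x + t • Δ), Δ⟫ ≤
      ∫ t in (0:ℝ)..1, (⟪gradient g x, Δ⟫ + β * ‖Δ‖ ^ 2 * t) := by
    apply intervalIntegral.integral_mono_on zero_le_one
      (cont.intervalIntegrable 0 1) (contrhs.intervalIntegrable 0 1)
    intro t ht
    have h1 : ⟪gradient g (x + t • Δ), Δ⟫ = ⟪gradient g x, Δ⟫ +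
        ⟪gradient g (x + t • Δ) - gradient g x, Δ⟫ := by
      rw [inner_sub_left]; ring
    rw [h1]
    have h2 : ⟪gradient g (x + t • Δ) - gradient g x, Δ⟫ ≤
        ‖gradient g (x + t • Δ) - gradient g x‖ * ‖Δ‖ := real_inner_le_norm _ _
    have h3 : ‖gradient g (x + t • Δ) - gradient g x‖ ≤ β * (t * ‖Δ‖) := by
      have := hsmooth (x + t • Δ) x
      simpa [norm_smul, abs_of_nonneg ht.1] using this
    nlinarith [norm_nonneg Δ, ht.1, hβ.le, norm_nonneg (gradient g (x + t • Δ) - gradient g x)]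
  have rhsval : ∫ t in (0:ℝ)..1, (⟪gradient g x, Δ⟫ + β * ‖Δ‖ ^ 2 * t) =
      ⟪gradient g x, Δ⟫ + β * ‖Δ‖ ^ 2 / 2 := by
    rw [intervalIntegral.integral_add (intervalIntegrable_const)
      ((by continuity : Continuous fun t : ℝ => β * ‖Δ‖ ^ 2 * t).intervalIntegrable 0 1),
      intervalIntegral.integral_const_mul]
    simp [integral_id]
    ring
  have : g y - g x ≤ ⟪gradient g x, Δ⟫ + β * ‖Δ‖ ^ 2 / 2 := by
    have := mono
    rw [ftc, rhsval] at this
    simpa [hΔ] using this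
  linarith [this]




lemma coco (f : E → ℝ) (G : E → E) (c : ℝ) (hc : 0 < c)
    (hconv : ∀ x y, f x + ⟪G x, y - x⟫ ≤ f y)
    (hdesc : ∀ x y, f y ≤ f x + ⟪G x, y - x⟫ + c / 2 * ‖y - x‖ ^ 2) :
    ∀ x y, ‖G x - G y‖ ^ 2 ≤ c * ⟪G x - G y, x - y⟫ := by
  have key : ∀ x y, f x + ⟪G x, y - x⟫ + 1 / (2 * c) * ‖G x - G y‖ ^ 2 ≤ f y := by
    intro x y
    set s := ‖G x - G y‖ ^ 2 with hs
    set z := y - c⁻¹ • (G y - G x) with hz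
    have h1 := hconv x z
    have h2 := hdesc y z
    have e1 : z - y = -(c⁻¹ • (G y - G x)) := by rw [hz]; abel
    have e2 : z - x = (y - x) - c⁻¹ • (G y - G x) := by rw [hz]; abel
    have i1 : ⟪G y, z - y⟫ = -(c⁻¹ * ⟪G y, G y - G x⟫) := by
      rw [e1, inner_neg_right, real_inner_smul_right]
    have i2 : ⟪G x, z - x⟫ = ⟪G x, y - x⟫ - c⁻¹ * ⟪G x, G y - G x⟫ := by
      rw [e2, inner_sub_right, real_inner_smul_right]
    have n1 : ‖z - y‖ ^ 2 = c⁻¹ ^ 2 * s := by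
      rw [e1, norm_neg, norm_smul, mul_pow, hs, norm_sub_rev (G y)]
      congr 1
      rw [Real.norm_eq_abs, sq_abs]
    have key2 : c⁻¹ * ⟪G y, G y - G x⟫ - c⁻¹ * ⟪G x, G y - G x⟫ = c⁻¹ * s := by
      rw [← mul_sub, ← inner_sub_left, real_inner_self_eq_norm_sq, hs, norm_sub_rev (G y)]
    rw [i1] at h2
    rw [i2] at h1
    rw [n1] at h2
    have h4 : c / 2 * (c⁻¹ ^ 2 * s) = 1 / (2 * c) * s := by
      field_simp
    have h6 : c⁻¹ * s = 2 * (1 / (2 * c) * s) := by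
      field_simp
    linarith
  intro x y
  set s := ‖G x - G y‖ ^ 2 with hs
  have k1 := key x y
  rw [← hs] at k1
  have k2 := key y x
  have e3 : ⟪G y, x - y⟫ = -⟪G y, y - x⟫ := by
    rw [← inner_neg_right]; congr 1; abel
  have hnn : ‖G y - G x‖ ^ 2 = s := by rw [hs, norm_sub_rev]
  rw [e3, hnn] at k2
  have key3 : ⟪G x, y - x⟫ - ⟪G y, y - x⟫ = -⟪G x - G y, x - y⟫ := by
    rw [← inner_sub_left, ← inner_neg_right]
    congr 1; abel
  have hsum : 1 / c * s ≤ ⟪G x - G y, x - y⟫ := by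
    have h6 : 1 / c * s = 2 * (1 / (2 * c) * s) := by field_simp
    linarith
  have := mul_le_mul_of_nonneg_left hsum hc.le
  have hcs : c * (1 / c * s) = s := by field_simp
  linarith

set_option maxHeartbeats 1000000 in
/-- **The gradient-descent map of a strongly convex smooth function is a contraction.**
If `g` is `λ`-strongly convex and differentiable with `β`-Lipschitz gradient
(`0 < λ ≤ β`), and `0 < γ ≤ 1/β`, then the gradient-descent map contracts distances by a
factor `1 − γλ`. -/
theorem gd_map_contraction (d : ℕ) (g : EuclideanSpace ℝ (Fin d) → ℝ) (lam β γ : ℝ)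
    (hlam : 0 < lam) (hlamβ : lam ≤ β)
    (hdiff : Differentiable ℝ g)
    (hsmooth : ∀ u v, ‖gradient g u - gradient g v‖ ≤ β * ‖u - v‖)
    (hsc : ∀ x y, g x + ⟪gradient g x, y - x⟫ + lam / 2 * ‖y - x‖ ^ 2 ≤ g y)
    (hγ0 : 0 < γ) (hγ : γ ≤ 1 / β) :
    ∀ x y, ‖(x - γ • gradient g x) - (y - γ • gradient g y)‖ ≤ (1 - γ * lam) * ‖x - y‖ := by
  have hβpre : 0 < β := lt_of_lt_of_le hlam hlamβ
  have descent_lemma := descent_lemma g β hβpre hdiff hsmooth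
  have coco := fun (f : EuclideanSpace ℝ (Fin d) → ℝ)
      (G : EuclideanSpace ℝ (Fin d) → EuclideanSpace ℝ (Fin d)) (c : ℝ)
      (hc : 0 < c) h1 h2 => coco f G c hc h1 h2

  have hβ : 0 < β := lt_of_lt_of_le hlam hlamβ
  -- strong monotonicity of the gradient
  have hmono : ∀ x y, lam * ‖x - y‖ ^ 2 ≤ ⟪gradient g x - gradient g y, x - y⟫ := by
    intro x y
    have h1 := hsc x y
    have h2 := hsc y x
    have neg : ∀ v : EuclideanSpace ℝ (Fin d), ⟪v, x - y⟫ = -⟪v, y - x⟫ := by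
      intro v
      rw [show (x - y) = -(y - x) by abel, inner_neg_right]
    have e1 : ⟪gradient g x - gradient g y, x - y⟫ =
        -⟪gradient g x, y - x⟫ + ⟪gradient g y, y - x⟫ := by
      rw [inner_sub_left, neg, neg]; ring
    have e2 : ‖y - x‖ = ‖x - y‖ := norm_sub_rev _ _
    rw [neg] at h2
    rw [e1]
    rw [e2] at h1
    linarith
  -- key inequality
  have K : ∀ x y, ‖gradient g x - gradient g y‖ ^ 2 + lam * β * ‖x - y‖ ^ 2 ≤
      (lam + β) * ⟪gradient g x - gradient g y, x - y⟫ := by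
    rcases eq_or_lt_of_le hlamβ with heq | hlt
    · -- lam = β
      intro x y
      have hD : ‖gradient g x - gradient g y‖ ^ 2 ≤ lam ^ 2 * ‖x - y‖ ^ 2 := by
        have h := hsmooth x y
        rw [← heq] at h
        nlinarith [norm_nonneg (gradient g x - gradient g y), norm_nonneg (x - y), hlam]
      have hm := hmono x y
      rw [← heq]
      nlinarith [hlam]
    · -- lam < β : apply co-coercivity to g - lam/2 ‖·‖²
      have hc : 0 < β - lam := by linarith
      have hcc := coco (fun z => g z - lam / 2 * ‖z‖ ^ 2)
        (fun z => gradient g z - lam • z) (β - lam) hc ?_ ?_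
      · intro x y
        have h := hcc x y
        have e0 : (gradient g x - lam • x) - (gradient g y - lam • y) =
            (gradient g x - gradient g y) - lam • (x - y) := by
          rw [smul_sub]; abel
        rw [e0] at h
        have e1 : ‖(gradient g x - gradient g y) - lam • (x - y)‖ ^ 2 =
            ‖gradient g x - gradient g y‖ ^ 2 -
              2 * (lam * ⟪gradient g x - gradient g y, x - y⟫) + lam ^ 2 * ‖x - y‖ ^ 2 := by
          rw [norm_sub_sq_real, real_inner_smul_right, norm_smul, mul_pow,
            Real.norm_eq_abs, sq_abs]
        have e2 : ⟪(gradient g x - gradient g y) - lam • (x - y), x - y⟫ =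
            ⟪gradient g x - gradient g y, x - y⟫ - lam * ‖x - y‖ ^ 2 := by
          rw [inner_sub_left, real_inner_smul_left, real_inner_self_eq_norm_sq]
        rw [e1, e2] at h
        nlinarith [h]
      · -- convexity of f
        intro x y
        have h := hsc x y
        have e1 : ⟪gradient g x - lam • x, y - x⟫ =
            ⟪gradient g x, y - x⟫ - lam * ⟪x, y - x⟫ := by
          rw [inner_sub_left, real_inner_smul_left]
        have e2 : ‖y - x‖ ^ 2 = ‖y‖ ^ 2 - 2 * ⟪y, x⟫ + ‖x‖ ^ 2 := norm_sub_sq_real _ _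
        have e3 : ⟪x, y - x⟫ = ⟪y, x⟫ - ‖x‖ ^ 2 := by
          rw [inner_sub_right, real_inner_self_eq_norm_sq, real_inner_comm]
        rw [e2] at h
        simp only [e1, e3]
        nlinarith [h]
      · -- descent for f with constant β - lam
        intro x y
        have h := descent_lemma x y
        have e1 : ⟪gradient g x - lam • x, y - x⟫ =
            ⟪gradient g x, y - x⟫ - lam * ⟪x, y - x⟫ := by
          rw [inner_sub_left, real_inner_smul_left]
        have e2 : ‖y - x‖ ^ 2 = ‖y‖ ^ 2 - 2 * ⟪y, x⟫ + ‖x‖ ^ 2 := norm_sub_sq_real _ _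
        have e3 : ⟪x, y - x⟫ = ⟪y, x⟫ - ‖x‖ ^ 2 := by
          rw [inner_sub_right, real_inner_self_eq_norm_sq, real_inner_comm]
        rw [e2] at h
        simp only [e1, e3, e2]
        nlinarith [h]
  -- conclusion
  intro x y
  have hγβ : γ * β ≤ 1 := by
    rw [div_eq_mul_inv, one_mul] at hγ
    calc γ * β ≤ β⁻¹ * β := by
          apply mul_le_mul_of_nonneg_right hγ hβ.le
      _ = 1 := inv_mul_cancel₀ hβ.ne'
  have h1mg : 0 ≤ 1 - γ * lam := by nlinarith [mul_le_mul_of_nonneg_left hlamβ hγ0.le]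
  have hrw : (x - γ • gradient g x) - (y - γ • gradient g y) =
      (x - y) - γ • (gradient g x - gradient g y) := by
    rw [smul_sub]; abel
  set Δ := x - y with hΔ
  set D := gradient g x - gradient g y with hD
  have hD2 : lam ^ 2 * ‖Δ‖ ^ 2 ≤ ‖D‖ ^ 2 := by
    by_cases h0 : ‖Δ‖ = 0
    · simp [h0]
    · have hm := hmono x y
      have hcs : ⟪D, Δ⟫ ≤ ‖D‖ * ‖Δ‖ := real_inner_le_norm _ _
      have hΔpos : 0 < ‖Δ‖ := lt_of_le_of_ne (norm_nonneg _) (Ne.symm h0)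
      have : lam * ‖Δ‖ ≤ ‖D‖ := by
        rw [← mul_le_mul_iff_of_pos_right hΔpos]
        calc lam * ‖Δ‖ * ‖Δ‖ = lam * ‖Δ‖ ^ 2 := by ring
          _ ≤ ⟪D, Δ⟫ := hm
          _ ≤ ‖D‖ * ‖Δ‖ := hcs
      nlinarith [norm_nonneg D, norm_nonneg Δ, hlam]
  have hKxy := K x y
  have hsq : ‖Δ - γ • D‖ ^ 2 ≤ ((1 - γ * lam) * ‖Δ‖) ^ 2 := by
    have e1 : ‖Δ - γ • D‖ ^ 2 = ‖Δ‖ ^ 2 - 2 * (γ * ⟪D, Δ⟫) + γ ^ 2 * ‖D‖ ^ 2 := by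
      rw [norm_sub_sq_real, real_inner_smul_right, norm_smul, mul_pow,
        Real.norm_eq_abs, sq_abs, real_inner_comm]
    rw [e1]
    have h2c : 0 ≤ 2 - γ * (lam + β) := by nlinarith [mul_le_mul_of_nonneg_left hlamβ hγ0.le]
    nlinarith [mul_nonneg hγ0.le (sub_nonneg.2 hKxy),
      mul_nonneg (mul_nonneg hγ0.le h2c) (sub_nonneg.2 hD2)]
  rw [hrw]
  calc ‖Δ - γ • D‖ = Real.sqrt (‖Δ - γ • D‖ ^ 2) := (Real.sqrt_sq (norm_nonneg _)).symm
    _ ≤ Real.sqrt (((1 - γ * lam) * ‖Δ‖) ^ 2) := Real.sqrt_le_sqrt hsq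
    _ = (1 - γ * lam) * ‖Δ‖ := Real.sqrt_sq (mul_nonneg h1mg (norm_nonneg _))
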